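/- arXiv:2311.12703 — 11 statements merged into one kernel-verified Lean document; each statement's English description precedes it below -/
import Mathlib

section
/- Let D ⊆ W be a subspace with T(D) ⊆ D, and suppose there is θ ∈ [0, π/2] such that ‖Tx‖ = cos θ · ‖x‖ for every x ∈ D (a pointwise slant subspace with slant angle θ). Then T(Tx) = -cos²θ · x for every x ∈ D. -/
open scoped RealInnerProductSpace

/-- Fiberwise: on a pointwise slant subspace `D ⊆ W` with slant angle `θ`,
one has `T² = -cos²θ · id`. -/
theorem slant_subspace_T_sq
    {V : Type*} [NormedAddCommGroup V] [InnerProductSpace ℝ V] [FiniteDimensional ℝ V]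
    (J : V →ₗ[ℝ] V)
    (hJinner : ∀ x y : V, ⟪J x, J y⟫ = ⟪x, y⟫)
    (hJsq : ∀ x : V, J (J x) = -x)
    (W : Submodule ℝ V)
    (T N : V →ₗ[ℝ] V)
    (hT : ∀ x ∈ W, T x ∈ W)
    (hN : ∀ x ∈ W, N x ∈ Wᗮ)
    (hTN : ∀ x ∈ W, J x = T x + N x)
    (D : Submodule ℝ V)
    (hDW : D ≤ W)
    (hTD : ∀ x ∈ D, T x ∈ D)
    (θ : ℝ)
    (hθ : θ ∈ Set.Icc 0 (Real.pi / 2))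
    (hslant : ∀ x ∈ D, ‖T x‖ = Real.cos θ * ‖x‖) :
    ∀ x ∈ D, T (T x) = -((Real.cos θ) ^ 2 • x) := by
  set c := Real.cos θ with hc
  -- T is skew-symmetric on W
  have skew : ∀ a ∈ W, ∀ b ∈ W, ⟪T a, b⟫ = -⟪a, T b⟫ := by
    intro a ha b hb
    have hNa : ⟪N a, b⟫ = 0 := by
      rw [real_inner_comm]
      exact (Submodule.mem_orthogonal W (N a)).mp (hN a ha) b hb
    have hNb : ⟪a, N b⟫ = 0 :=
      (Submodule.mem_orthogonal W (N b)).mp (hN b hb) a ha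
    have h1 : ⟪J a, b⟫ = ⟪T a, b⟫ := by
      rw [hTN a ha, inner_add_left, hNa, add_zero]
    have h3 : ⟪a, J b⟫ = ⟪a, T b⟫ := by
      rw [hTN b hb, inner_add_right, hNb, add_zero]
    have h2 : ⟪J a, b⟫ = -⟪a, J b⟫ := by
      have := hJinner a (J b)
      rw [hJsq b, inner_neg_right] at this
      linarith
    rw [← h1, h2, h3]
  -- polarization
  have hpol : ∀ a ∈ D, ∀ b ∈ D, ⟪T a, T b⟫ = c ^ 2 * ⟪a, b⟫ := by
    intro a ha b hb
    have e1 : ‖T a + T b‖ ^ 2 = (c * ‖a + b‖) ^ 2 := by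
      rw [← map_add, hslant _ (add_mem ha hb)]
    have ea : ‖T a‖ = c * ‖a‖ := hslant a ha
    have eb : ‖T b‖ = c * ‖b‖ := hslant b hb
    rw [norm_add_sq_real, ea, eb] at e1
    have e2 : (c * ‖a + b‖) ^ 2 = c ^ 2 * ‖a + b‖ ^ 2 := by ring
    rw [e2, norm_add_sq_real] at e1
    nlinarith [e1]
  intro x hx
  have hTx : T x ∈ D := hTD x hx
  have hTTx : T (T x) ∈ D := hTD _ hTx
  set z : V := T (T x) + c ^ 2 • x with hz
  have hzD : z ∈ D := add_mem hTTx (Submodule.smul_mem D _ hx)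
  have key : ∀ y ∈ D, ⟪z, y⟫ = 0 := by
    intro y hy
    have h1 : ⟪T (T x), y⟫ = -⟪T x, T y⟫ :=
      skew (T x) (hT x (hDW hx)) y (hDW hy)
    have h2 : ⟪T x, T y⟫ = c ^ 2 * ⟪x, y⟫ := hpol x hx y hy
    rw [hz, inner_add_left, h1, h2, real_inner_smul_left]
    ring
  have : z = 0 := by
    have := key z hzD
    exact inner_self_eq_zero.mp this
  have : T (T x) = -(c ^ 2 • x) := by
    rw [hz] at this
    linear_combination (norm := abel) this
  exact this
end

section
/- T(Tx) = -∑_{i=0}^{k} cos²θᵢ · Pᵢx for every x ∈ W; that is, T² = -∑_{i=0}^{k} cos²θᵢ · Pᵢ on W (Lemma le6 (ii), tangential identity, in fiberwise form). -/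
open scoped RealInnerProductSpace

/-- Lemma le6 (ii), tangential identity, fiberwise: `T² = -∑ᵢ cos²θᵢ · Pᵢ` on `W`. -/
theorem T_sq_eq_neg_sum_cos_sq_proj
    {V : Type*} [NormedAddCommGroup V] [InnerProductSpace ℝ V] [FiniteDimensional ℝ V]
    (J : V →ₗ[ℝ] V)
    (hJinner : ∀ x y : V, ⟪J x, J y⟫ = ⟪x, y⟫)
    (hJsq : ∀ x : V, J (J x) = -x)
    (W : Submodule ℝ V)
    (T N : V →ₗ[ℝ] V)
    (hT : ∀ x ∈ W, T x ∈ W)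
    (hN : ∀ x ∈ W, N x ∈ Wᗮ)
    (hTN : ∀ x ∈ W, J x = T x + N x)
    (k : ℕ)
    (D : Fin (k+1) → Submodule ℝ V)
    (hDW : ∀ i, D i ≤ W)
    (hDorth : ∀ i j, i ≠ j → ∀ x ∈ D i, ∀ y ∈ D j, ⟪x, y⟫ = 0)
    (hinv : ∀ x ∈ D 0, J x ∈ D 0)
    (hTD : ∀ i : Fin (k+1), i ≠ 0 → ∀ x ∈ D i, T x ∈ D i)
    (θ : Fin (k+1) → ℝ)
    (hθ0 : θ 0 = 0)
    (hθ : ∀ i : Fin (k+1), i ≠ 0 → θ i ∈ Set.Ioc 0 (Real.pi / 2))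
    (hslant : ∀ i : Fin (k+1), i ≠ 0 → ∀ x ∈ D i, ‖T x‖ = Real.cos (θ i) * ‖x‖)
    (P : Fin (k+1) → V →ₗ[ℝ] V)
    (hPmem : ∀ i x, P i x ∈ D i)
    (hPorth : ∀ i x, ∀ y ∈ D i, ⟪x - P i x, y⟫ = 0)
    (hPsum : ∀ x ∈ W, x = ∑ i, P i x) :
    ∀ x ∈ W, T (T x) = -∑ i, (Real.cos (θ i)) ^ 2 • P i x := by
  -- J is skew-adjoint
  have hJskew : ∀ x y : V, ⟪J x, y⟫ = -⟪x, J y⟫ := by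
    intro x y
    have h := hJinner x (J y)
    rw [hJsq y, inner_neg_right] at h
    linarith
  -- N x is orthogonal to W
  have hNinner : ∀ x ∈ W, ∀ y ∈ W, ⟪N x, y⟫ = 0 := by
    intro x hx y hy
    have := (Submodule.mem_orthogonal _ _).mp (hN x hx) y hy
    rwa [real_inner_comm] at this
  -- T agrees with J in inner products against W
  have hTJ : ∀ x ∈ W, ∀ y ∈ W, ⟪T x, y⟫ = ⟪J x, y⟫ := by
    intro x hx y hy
    rw [hTN x hx, inner_add_left, hNinner x hx y hy, add_zero]
  -- T is skew-adjoint on W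
  have hTskew : ∀ x ∈ W, ∀ y ∈ W, ⟪T x, y⟫ = -⟪x, T y⟫ := by
    intro x hx y hy
    have h2 := hTJ y hy x hx
    have c1 := real_inner_comm x (J y)
    have c2 := real_inner_comm x (T y)
    rw [hTJ x hx y hy, hJskew]
    linarith
  -- on D 0, T = J
  have hT0 : ∀ x ∈ D 0, T x = J x := by
    intro x hx
    have hxW := hDW 0 hx
    have hJxW : J x ∈ W := hDW 0 (hinv x hx)
    have hNW : N x ∈ W := by
      have : N x = J x - T x := by rw [hTN x hxW]; abel
      rw [this]; exact Submodule.sub_mem _ hJxW (hT x hxW)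
    have hN0 : N x = 0 := by
      have := hNinner x hxW (N x) hNW
      rwa [real_inner_self_eq_norm_sq, pow_eq_zero_iff (by norm_num), norm_eq_zero] at this
    rw [hTN x hxW, hN0, add_zero]
  -- key pointwise identity on each D i
  have key : ∀ i : Fin (k+1), ∀ x ∈ D i, T (T x) = -((Real.cos (θ i)) ^ 2 • x) := by
    intro i x hx
    by_cases hi : i = 0
    · subst hi
      rw [hT0 x hx, hT0 (J x) (hinv x hx), hJsq, hθ0, Real.cos_zero]
      simp
    · set c := Real.cos (θ i) with hc
      have hxW := hDW i hx
      have hTx : T x ∈ D i := hTD i hi x hx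
      have hTxW := hDW i hTx
      have h1 : ‖T x‖ = c * ‖x‖ := hslant i hi x hx
      have h2 : ‖T (T x)‖ = c * ‖T x‖ := hslant i hi (T x) hTx
      have hin : ⟪T (T x), x⟫ = -(c ^ 2 * ‖x‖ ^ 2) := by
        rw [hTskew (T x) hTxW x hxW, real_inner_self_eq_norm_sq, h1]
        ring
      have hz : ⟪T (T x) + c ^ 2 • x, T (T x) + c ^ 2 • x⟫ = 0 := by
        rw [real_inner_add_add_self, real_inner_smul_right, hin,
          real_inner_smul_left, real_inner_smul_right,
          real_inner_self_eq_norm_sq, real_inner_self_eq_norm_sq, h2, h1]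
        ring
      have := inner_self_eq_zero.mp hz
      have : T (T x) = -(c ^ 2 • x) := by
        rw [← sub_eq_zero]; rw [sub_neg_eq_add]; exact this
      exact this
  intro x hxW
  calc T (T x) = T (T (∑ i, P i x)) := by rw [← hPsum x hxW]
    _ = ∑ i, T (T (P i x)) := by rw [map_sum, map_sum]
    _ = ∑ i, -((Real.cos (θ i)) ^ 2 • P i x) :=
        Finset.sum_congr rfl fun i _ => key i (P i x) (hPmem i x)
    _ = -∑ i, (Real.cos (θ i)) ^ 2 • P i x := by rw [Finset.sum_neg_distrib]
end

section
/- ⟪Tx, Ty⟫ = ∑_{i=0}^{k} cos²θᵢ · ⟪Pᵢx, Pᵢy⟫ for all x, y ∈ W (Lemma le6 (iii), first identity, in fiberwise form). -/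
open scoped RealInnerProductSpace

/-- Lemma le6 (iii), first identity, fiberwise:
`⟪Tx, Ty⟫ = ∑ᵢ cos²θᵢ · ⟪Pᵢx, Pᵢy⟫` on `W`. -/
theorem inner_T_T_eq_sum_cos_sq
    {V : Type*} [NormedAddCommGroup V] [InnerProductSpace ℝ V] [FiniteDimensional ℝ V]
    (J : V →ₗ[ℝ] V)
    (hJinner : ∀ x y : V, ⟪J x, J y⟫ = ⟪x, y⟫)
    (hJsq : ∀ x : V, J (J x) = -x)
    (W : Submodule ℝ V)
    (T N : V →ₗ[ℝ] V)
    (hT : ∀ x ∈ W, T x ∈ W)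
    (hN : ∀ x ∈ W, N x ∈ Wᗮ)
    (hTN : ∀ x ∈ W, J x = T x + N x)
    (k : ℕ)
    (D : Fin (k+1) → Submodule ℝ V)
    (hDW : ∀ i, D i ≤ W)
    (hDorth : ∀ i j, i ≠ j → ∀ x ∈ D i, ∀ y ∈ D j, ⟪x, y⟫ = 0)
    (hinv : ∀ x ∈ D 0, J x ∈ D 0)
    (hTD : ∀ i : Fin (k+1), i ≠ 0 → ∀ x ∈ D i, T x ∈ D i)
    (θ : Fin (k+1) → ℝ)
    (hθ0 : θ 0 = 0)
    (hθ : ∀ i : Fin (k+1), i ≠ 0 → θ i ∈ Set.Ioc 0 (Real.pi / 2))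
    (hslant : ∀ i : Fin (k+1), i ≠ 0 → ∀ x ∈ D i, ‖T x‖ = Real.cos (θ i) * ‖x‖)
    (P : Fin (k+1) → V →ₗ[ℝ] V)
    (hPmem : ∀ i x, P i x ∈ D i)
    (hPorth : ∀ i x, ∀ y ∈ D i, ⟪x - P i x, y⟫ = 0)
    (hPsum : ∀ x ∈ W, x = ∑ i, P i x) :
    ∀ x ∈ W, ∀ y ∈ W, ⟪T x, T y⟫ = ∑ i, (Real.cos (θ i)) ^ 2 * ⟪P i x, P i y⟫ := by

  -- On `D 0`, `T` agrees with `J`.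
  have hT0 : ∀ u ∈ D 0, T u = J u := by
    intro u hu
    have huW := hDW 0 hu
    have hJu : J u ∈ W := hDW 0 (hinv u hu)
    have hNu : N u = J u - T u := by
      have h := hTN u huW
      rw [h]; abel
    have hNW : N u ∈ W := by
      rw [hNu]; exact Submodule.sub_mem _ hJu (hT u huW)
    have hN0 : N u = 0 := by
      have h1 := (Submodule.mem_orthogonal _ _).mp (hN u huW) (N u) hNW
      exact inner_self_eq_zero.mp h1
    have := hTN u huW
    rw [this, hN0, add_zero]
  have hTmem : ∀ i, ∀ u ∈ D i, T u ∈ D i := by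
    intro i u hu
    by_cases hi : i = 0
    · subst hi
      rw [hT0 u hu]
      exact hinv u hu
    · exact hTD i hi u hu
  have hdiag : ∀ i, ∀ u ∈ D i, ∀ v ∈ D i,
      ⟪T u, T v⟫ = (Real.cos (θ i)) ^ 2 * ⟪u, v⟫ := by
    intro i u hu v hv
    by_cases hi : i = 0
    · subst hi
      rw [hT0 u hu, hT0 v hv, hJinner, hθ0]
      simp
    · have h1 : ‖T u + T v‖ = Real.cos (θ i) * ‖u + v‖ := by
        rw [← map_add]
        exact hslant i hi _ (Submodule.add_mem _ hu hv)
      have h2 := hslant i hi u hu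
      have h3 := hslant i hi v hv
      rw [real_inner_eq_norm_add_mul_self_sub_norm_mul_self_sub_norm_mul_self_div_two (T u),
        real_inner_eq_norm_add_mul_self_sub_norm_mul_self_sub_norm_mul_self_div_two u,
        h1, h2, h3]
      ring
  intro x hx y hy
  have hx' := hPsum x hx
  have hy' := hPsum y hy
  calc ⟪T x, T y⟫ = ⟪∑ i, T (P i x), ∑ j, T (P j y)⟫ := by
        rw [← map_sum, ← map_sum, ← hx', ← hy']
    _ = ∑ i, ∑ j, ⟪T (P i x), T (P j y)⟫ := by
        rw [sum_inner]
        exact Finset.sum_congr rfl fun i _ => inner_sum _ _ _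
    _ = ∑ i, ⟪T (P i x), T (P i y)⟫ := by
        refine Finset.sum_congr rfl fun i _ => ?_
        refine Finset.sum_eq_single i (fun j _ hji => ?_) (by simp)
        exact hDorth i j (Ne.symm hji) _ (hTmem i _ (hPmem i x)) _ (hTmem j _ (hPmem j y))
    _ = ∑ i, (Real.cos (θ i)) ^ 2 * ⟪P i x, P i y⟫ :=
        Finset.sum_congr rfl fun i _ => hdiag i _ (hPmem i x) _ (hPmem i y)
end

section
/- ⟪Nx, Ny⟫ = ∑_{i=1}^{k} sin²θᵢ · ⟪Pᵢx, Pᵢy⟫ for all x, y ∈ W (Lemma le6 (iii), second identity, in fiberwise form). -/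
open scoped RealInnerProductSpace

private lemma diag_sum {V : Type*} [NormedAddCommGroup V] [InnerProductSpace ℝ V]
    {n : ℕ} (a b : Fin n → V) (h : ∀ i j, i ≠ j → ⟪a i, b j⟫ = 0) :
    ⟪∑ i, a i, ∑ j, b j⟫ = ∑ i, ⟪a i, b i⟫ := by
  rw [sum_inner]
  refine Finset.sum_congr rfl fun i _ => ?_
  rw [inner_sum]
  rw [Finset.sum_eq_single_of_mem i (Finset.mem_univ i)]
  intro j _ hj
  exact h i j (Ne.symm hj)

/-- Lemma le6 (iii), second identity, fiberwise:
`⟪Nx, Ny⟫ = ∑_{i=1}^{k} sin²θᵢ · ⟪Pᵢx, Pᵢy⟫` on `W`. -/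
theorem inner_N_N_eq_sum_sin_sq
    {V : Type*} [NormedAddCommGroup V] [InnerProductSpace ℝ V] [FiniteDimensional ℝ V]
    (J : V →ₗ[ℝ] V)
    (hJinner : ∀ x y : V, ⟪J x, J y⟫ = ⟪x, y⟫)
    (hJsq : ∀ x : V, J (J x) = -x)
    (W : Submodule ℝ V)
    (T N : V →ₗ[ℝ] V)
    (hT : ∀ x ∈ W, T x ∈ W)
    (hN : ∀ x ∈ W, N x ∈ Wᗮ)
    (hTN : ∀ x ∈ W, J x = T x + N x)
    (k : ℕ)
    (D : Fin (k+1) → Submodule ℝ V)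
    (hDW : ∀ i, D i ≤ W)
    (hDorth : ∀ i j, i ≠ j → ∀ x ∈ D i, ∀ y ∈ D j, ⟪x, y⟫ = 0)
    (hinv : ∀ x ∈ D 0, J x ∈ D 0)
    (hTD : ∀ i : Fin (k+1), i ≠ 0 → ∀ x ∈ D i, T x ∈ D i)
    (θ : Fin (k+1) → ℝ)
    (hθ0 : θ 0 = 0)
    (hθ : ∀ i : Fin (k+1), i ≠ 0 → θ i ∈ Set.Ioc 0 (Real.pi / 2))
    (hslant : ∀ i : Fin (k+1), i ≠ 0 → ∀ x ∈ D i, ‖T x‖ = Real.cos (θ i) * ‖x‖)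
    (P : Fin (k+1) → V →ₗ[ℝ] V)
    (hPmem : ∀ i x, P i x ∈ D i)
    (hPorth : ∀ i x, ∀ y ∈ D i, ⟪x - P i x, y⟫ = 0)
    (hPsum : ∀ x ∈ W, x = ∑ i, P i x) :
    ∀ x ∈ W, ∀ y ∈ W,
      ⟪N x, N y⟫ = ∑ i ∈ Finset.univ.erase (0 : Fin (k+1)),
        (Real.sin (θ i)) ^ 2 * ⟪P i x, P i y⟫ := by
  -- On D 0, N vanishes and T = J
  have hT0 : ∀ x ∈ D 0, T x = J x := by
    intro x hx
    have hxW : x ∈ W := hDW 0 hx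
    have hJx : J x ∈ W := hDW 0 (hinv x hx)
    have hNx : N x ∈ W := by
      have : N x = J x - T x := by rw [hTN x hxW]; abel
      rw [this]; exact Submodule.sub_mem W hJx (hT x hxW)
    have : N x = 0 := by
      have h1 := hN x hxW
      have h2 : ⟪N x, N x⟫ = 0 := (Submodule.mem_orthogonal W (N x)).mp h1 (N x) hNx
      exact inner_self_eq_zero.mp h2
    have := hTN x hxW
    rw [this, ‹N x = 0›, add_zero]
  -- T maps each D i into D i
  have hTmem : ∀ i : Fin (k+1), ∀ x ∈ D i, T x ∈ D i := by
    intro i x hx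
    by_cases hi : i = 0
    · subst hi; rw [hT0 x hx]; exact hinv x hx
    · exact hTD i hi x hx
  -- inner products of T on each D i
  have hTT : ∀ i : Fin (k+1), ∀ u ∈ D i, ∀ v ∈ D i,
      ⟪T u, T v⟫ = Real.cos (θ i) ^ 2 * ⟪u, v⟫ := by
    intro i u hu v hv
    by_cases hi : i = 0
    · subst hi
      rw [hθ0, Real.cos_zero, one_pow, one_mul, hT0 u hu, hT0 v hv, hJinner]
    · have huv : u + v ∈ D i := Submodule.add_mem _ hu hv
      have e1 : ‖T (u + v)‖ = Real.cos (θ i) * ‖u + v‖ := hslant i hi _ huv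
      have e2 : ‖T u‖ = Real.cos (θ i) * ‖u‖ := hslant i hi _ hu
      have e3 : ‖T v‖ = Real.cos (θ i) * ‖v‖ := hslant i hi _ hv
      have q1 : ‖T u + T v‖ ^ 2 = Real.cos (θ i) ^ 2 * ‖u + v‖ ^ 2 := by
        rw [← map_add, e1]; ring
      have q2 : ‖T u‖ ^ 2 = Real.cos (θ i) ^ 2 * ‖u‖ ^ 2 := by rw [e2]; ring
      have q3 : ‖T v‖ ^ 2 = Real.cos (θ i) ^ 2 * ‖v‖ ^ 2 := by rw [e3]; ring
      have n1 : ‖T u + T v‖ ^ 2 = ‖T u‖ ^ 2 + 2 * ⟪T u, T v⟫ + ‖T v‖ ^ 2 :=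
        norm_add_sq_real _ _
      have n2 : ‖u + v‖ ^ 2 = ‖u‖ ^ 2 + 2 * ⟪u, v⟫ + ‖v‖ ^ 2 := norm_add_sq_real _ _
      nlinarith [q1, q2, q3, n1, n2]
  intro x hx y hy
  -- ⟪x,y⟫ = ⟪Tx,Ty⟫ + ⟪Nx,Ny⟫
  have hcross1 : ⟪T x, N y⟫ = 0 :=
    (Submodule.inner_right_of_mem_orthogonal (hT x hx) (hN y hy))
  have hcross2 : ⟪N x, T y⟫ = 0 := by
    rw [real_inner_comm]
    exact Submodule.inner_right_of_mem_orthogonal (hT y hy) (hN x hx)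
  have hmain : ⟪x, y⟫ = ⟪T x, T y⟫ + ⟪N x, N y⟫ := by
    have h := hJinner x y
    rw [hTN x hx, hTN y hy, inner_add_left, inner_add_right, inner_add_right] at h
    linarith [h, hcross1, hcross2]
  -- diagonal decompositions
  have hxy : ⟪x, y⟫ = ∑ i, ⟪P i x, P i y⟫ := by
    conv_lhs => rw [hPsum x hx, hPsum y hy]
    exact diag_sum _ _ fun i j hij => hDorth i j hij _ (hPmem i x) _ (hPmem j y)
  have hTxy : ⟪T x, T y⟫ = ∑ i, ⟪T (P i x), T (P i y)⟫ := by
    have ex : T x = ∑ i, T (P i x) := by rw [← map_sum, ← hPsum x hx]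
    have ey : T y = ∑ i, T (P i y) := by rw [← map_sum, ← hPsum y hy]
    conv_lhs => rw [ex, ey]
    exact diag_sum _ _ fun i j hij =>
      hDorth i j hij _ (hTmem i _ (hPmem i x)) _ (hTmem j _ (hPmem j y))
  have hTi : ∀ i, ⟪T (P i x), T (P i y)⟫ = Real.cos (θ i) ^ 2 * ⟪P i x, P i y⟫ :=
    fun i => hTT i _ (hPmem i x) _ (hPmem i y)
  have hNN : ⟪N x, N y⟫ = ∑ i, (1 - Real.cos (θ i) ^ 2) * ⟪P i x, P i y⟫ := by
    have : ⟪N x, N y⟫ = ⟪x, y⟫ - ⟪T x, T y⟫ := by linarith [hmain]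
    rw [this, hxy, hTxy, ← Finset.sum_sub_distrib]
    refine Finset.sum_congr rfl fun i _ => ?_
    rw [hTi i]; ring
  rw [hNN]
  rw [← Finset.add_sum_erase _ _ (Finset.mem_univ (0 : Fin (k+1)))]
  have h0 : (1 - Real.cos (θ 0) ^ 2) * ⟪P 0 x, P 0 y⟫ = 0 := by
    rw [hθ0, Real.cos_zero]; ring
  rw [h0, zero_add]
  refine Finset.sum_congr rfl fun i hi => ?_
  rw [Real.sin_sq]
end

section
/- For x ∈ W, one has Nx = 0 if and only if x ∈ D₀. (This is the key step in the proof of Theorem 3.5 (i): since each θᵢ is nowhere zero, the vanishing of N(∑_{i=1}^{k} Pᵢx) forces Pᵢx = 0 for all i ∈ {1,…,k}.) -/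
open scoped RealInnerProductSpace

/-- Key step in Theorem 3.5 (i), fiberwise: for `x ∈ W`, `Nx = 0` iff `x ∈ D₀`. -/
theorem N_eq_zero_iff_mem_invariant
    {V : Type*} [NormedAddCommGroup V] [InnerProductSpace ℝ V] [FiniteDimensional ℝ V]
    (J : V →ₗ[ℝ] V)
    (hJinner : ∀ x y : V, ⟪J x, J y⟫ = ⟪x, y⟫)
    (hJsq : ∀ x : V, J (J x) = -x)
    (W : Submodule ℝ V)
    (T N : V →ₗ[ℝ] V)
    (hT : ∀ x ∈ W, T x ∈ W)
    (hN : ∀ x ∈ W, N x ∈ Wᗮ)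
    (hTN : ∀ x ∈ W, J x = T x + N x)
    (k : ℕ)
    (D : Fin (k+1) → Submodule ℝ V)
    (hDW : ∀ i, D i ≤ W)
    (hDorth : ∀ i j, i ≠ j → ∀ x ∈ D i, ∀ y ∈ D j, ⟪x, y⟫ = 0)
    (hinv : ∀ x ∈ D 0, J x ∈ D 0)
    (hTD : ∀ i : Fin (k+1), i ≠ 0 → ∀ x ∈ D i, T x ∈ D i)
    (θ : Fin (k+1) → ℝ)
    (hθ0 : θ 0 = 0)
    (hθ : ∀ i : Fin (k+1), i ≠ 0 → θ i ∈ Set.Ioc 0 (Real.pi / 2))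
    (hslant : ∀ i : Fin (k+1), i ≠ 0 → ∀ x ∈ D i, ‖T x‖ = Real.cos (θ i) * ‖x‖)
    (P : Fin (k+1) → V →ₗ[ℝ] V)
    (hPmem : ∀ i x, P i x ∈ D i)
    (hPorth : ∀ i x, ∀ y ∈ D i, ⟪x - P i x, y⟫ = 0)
    (hPsum : ∀ x ∈ W, x = ∑ i, P i x) :
    ∀ x ∈ W, (N x = 0 ↔ x ∈ D 0) := by
  -- a vector in both W and Wᗮ is zero
  have hWinter : ∀ v : V, v ∈ W → v ∈ Wᗮ → v = 0 := by
    intro v hv hv'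
    have h := (Submodule.mem_orthogonal W v).mp hv' v hv
    exact inner_self_eq_zero.mp h
  -- N vanishes on D 0
  have hN0 : ∀ y ∈ D 0, N y = 0 := by
    intro y hy
    have hyW : y ∈ W := hDW 0 hy
    have hJy : J y ∈ W := hDW 0 (hinv y hy)
    have hNyW : N y ∈ W := by
      have hNy : N y = J y - T y := by
        have := hTN y hyW
        rw [this]; abel
      rw [hNy]
      exact Submodule.sub_mem W hJy (hT y hyW)
    exact hWinter _ hNyW (hN y hyW)
  -- Pythagoras for pairwise orthogonal families
  have pyth : ∀ (v : Fin (k+1) → V), (∀ i j, i ≠ j → ⟪v i, v j⟫ = 0) →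
      ⟪∑ i, v i, ∑ i, v i⟫ = ∑ i, ⟪v i, v i⟫ := by
    intro v hv
    rw [sum_inner]
    refine Finset.sum_congr rfl fun i _ => ?_
    rw [inner_sum, Finset.sum_eq_single i]
    · intro j _ hj
      exact hv i j (Ne.symm hj)
    · intro h
      exact absurd (Finset.mem_univ i) h
  intro x hxW
  constructor
  · intro hNx
    -- T maps each P i x into D i
    have hTP : ∀ i, T (P i x) ∈ D i := by
      intro i
      by_cases hi : i = 0
      · subst hi
        have hmem := hPmem 0 x
        have hTeq : T (P 0 x) = J (P 0 x) := by
          have := hTN (P 0 x) (hDW 0 hmem)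
          rw [this, hN0 _ hmem, add_zero]
        rw [hTeq]
        exact hinv _ hmem
      · exact hTD i hi _ (hPmem i x)
    have hxsum : x = ∑ i, P i x := hPsum x hxW
    have hTsum : T x = ∑ i, T (P i x) := by
      conv_lhs => rw [hxsum]
      rw [map_sum]
    have hJx : J x = T x := by rw [hTN x hxW, hNx, add_zero]
    have eq1 : ⟪x, x⟫ = ∑ i, ⟪P i x, P i x⟫ := by
      conv_lhs => rw [hxsum]
      exact pyth _ fun i j hij => hDorth i j hij _ (hPmem i x) _ (hPmem j x)
    have eq2 : ⟪T x, T x⟫ = ∑ i, ⟪T (P i x), T (P i x)⟫ := by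
      rw [hTsum]
      exact pyth _ fun i j hij => hDorth i j hij _ (hTP i) _ (hTP j)
    have eq3 : ⟪x, x⟫ = ⟪T x, T x⟫ := by rw [← hJx, hJinner]
    -- termwise comparison
    have hterm : ∀ i : Fin (k+1), i ≠ 0 →
        ⟪T (P i x), T (P i x)⟫ = Real.cos (θ i) ^ 2 * ⟪P i x, P i x⟫ := by
      intro i hi
      rw [real_inner_self_eq_norm_sq, real_inner_self_eq_norm_sq,
        hslant i hi _ (hPmem i x)]
      ring
    have hterm0 : ⟪T (P 0 x), T (P 0 x)⟫ = ⟪P 0 x, P 0 x⟫ := by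
      have hTeq : T (P 0 x) = J (P 0 x) := by
        have := hTN (P 0 x) (hDW 0 (hPmem 0 x))
        rw [this, hN0 _ (hPmem 0 x), add_zero]
      rw [hTeq, hJinner]
    -- the sum of nonnegative differences is zero
    have hsum0 : ∑ i, (⟪P i x, P i x⟫ - ⟪T (P i x), T (P i x)⟫) = 0 := by
      rw [Finset.sum_sub_distrib, ← eq1, ← eq2, eq3, sub_self]
    have hnonneg : ∀ i ∈ Finset.univ,
        (0:ℝ) ≤ ⟪P i x, P i x⟫ - ⟪T (P i x), T (P i x)⟫ := by
      intro i _
      by_cases hi : i = 0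
      · subst hi; rw [hterm0]; simp
      · rw [hterm i hi, real_inner_self_eq_norm_sq]
        have hsin : Real.sin (θ i) ^ 2 + Real.cos (θ i) ^ 2 = 1 :=
          Real.sin_sq_add_cos_sq (θ i)
        nlinarith [sq_nonneg (‖P i x‖), sq_nonneg (Real.sin (θ i))]
    have hzero := (Finset.sum_eq_zero_iff_of_nonneg hnonneg).mp hsum0
    -- each nonzero component vanishes
    have hPzero : ∀ i : Fin (k+1), i ≠ 0 → P i x = 0 := by
      intro i hi
      have h := hzero i (Finset.mem_univ i)
      rw [hterm i hi] at h
      have hsinpos : 0 < Real.sin (θ i) := by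
        have hθi := hθ i hi
        exact Real.sin_pos_of_pos_of_lt_pi hθi.1
          (lt_of_le_of_lt hθi.2 (by linarith [Real.pi_pos]))
      have h1 : (1 - Real.cos (θ i) ^ 2) * ⟪P i x, P i x⟫ = 0 := by linarith
      have h2 : 1 - Real.cos (θ i) ^ 2 = Real.sin (θ i) ^ 2 := by
        have := Real.sin_sq_add_cos_sq (θ i); linarith
      rw [h2] at h1
      have h3 : ⟪P i x, P i x⟫ = 0 := by
        rcases mul_eq_zero.mp h1 with h4 | h4
        · exact absurd h4 (by positivity)
        · exact h4
      exact inner_self_eq_zero.mp h3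
    have hsum' : ∑ i, P i x = P 0 x :=
      Finset.sum_eq_single 0 (fun j _ hj => hPzero j hj)
        (fun h => absurd (Finset.mem_univ _) h)
    rw [hxsum, hsum']
    exact hPmem 0 x
  · intro hx
    exact hN0 x hx
end

section
/- If A_{nv} x = -A_v(Tx) for all x ∈ W and v ∈ W⊥, then h(Tx, y) = h(x, Ty) for all x, y ∈ W (Proposition 3.4 (ii), implication (3) ⇒ (1), in fiberwise form). -/
open scoped RealInnerProductSpace

/-- Proposition 3.4 (ii), implication (3) ⇒ (1), fiberwise:
if `A_{nv} x = -A_v(Tx)` for all `x ∈ W`, `v ∈ W⊥`, then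
`h(Tx, y) = h(x, Ty)` for all `x, y ∈ W`. -/
theorem h_T_symm_of_shape_n_anticommutes
    {V : Type*} [NormedAddCommGroup V] [InnerProductSpace ℝ V] [FiniteDimensional ℝ V]
    (J : V →ₗ[ℝ] V)
    (hJinner : ∀ x y : V, ⟪J x, J y⟫ = ⟪x, y⟫)
    (hJsq : ∀ x : V, J (J x) = -x)
    (W : Submodule ℝ V)
    (T N : V →ₗ[ℝ] V)
    (hT : ∀ x ∈ W, T x ∈ W)
    (hN : ∀ x ∈ W, N x ∈ Wᗮ)
    (hTN : ∀ x ∈ W, J x = T x + N x)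
    (t n : V →ₗ[ℝ] V)
    (ht : ∀ v ∈ Wᗮ, t v ∈ W)
    (hn : ∀ v ∈ Wᗮ, n v ∈ Wᗮ)
    (htn : ∀ v ∈ Wᗮ, J v = t v + n v)
    (h : V →ₗ[ℝ] V →ₗ[ℝ] V)
    (hhmem : ∀ x ∈ W, ∀ y ∈ W, h x y ∈ Wᗮ)
    (hhsymm : ∀ x ∈ W, ∀ y ∈ W, h x y = h y x)
    (A : V → V →ₗ[ℝ] V)
    (hAmem : ∀ v ∈ Wᗮ, ∀ x ∈ W, A v x ∈ W)
    (hA : ∀ v ∈ Wᗮ, ∀ x ∈ W, ∀ y ∈ W, ⟪A v x, y⟫ = ⟪h x y, v⟫)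
    (h3 : ∀ v ∈ Wᗮ, ∀ x ∈ W, A (n v) x = -(A v (T x))) :
    ∀ x ∈ W, ∀ y ∈ W, h (T x) y = h x (T y) := by
  intro x hx y hy
  have key : ∀ v ∈ Wᗮ, ⟪h (T x) y - h x (T y), v⟫ = 0 := by
    intro v hv
    have hATx : A v (T x) = -(A (n v) x) := by rw [h3 v hv x hx, neg_neg]
    have hATy : A v (T y) = -(A (n v) y) := by rw [h3 v hv y hy, neg_neg]
    have e1 : ⟪h (T x) y, v⟫ = -⟪h x y, n v⟫ := by
      rw [← hA v hv (T x) (hT x hx) y hy, hATx, inner_neg_left,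
        hA (n v) (hn v hv) x hx y hy]
    have e2 : ⟪h x (T y), v⟫ = -⟪h x y, n v⟫ := by
      rw [hhsymm x hx (T y) (hT y hy), ← hA v hv (T y) (hT y hy) x hx, hATy,
        inner_neg_left, hA (n v) (hn v hv) y hy x hx, hhsymm y hy x hx]
    rw [inner_sub_left, e1, e2, sub_self]
  have hd : h (T x) y - h x (T y) ∈ Wᗮ :=
    Submodule.sub_mem _ (hhmem (T x) (hT x hx) y hy) (hhmem x hx (T y) (hT y hy))
  have h0 := key _ hd
  rwa [inner_self_eq_zero, sub_eq_zero] at h0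
end

section
/- If h(x, Ty) = n h(x, y) for all x, y ∈ W (the fiberwise form of the condition ∇N = 0 for a submanifold of a Kähler manifold), then A_{nv} x = -A_v(Tx) for all x ∈ W and v ∈ W⊥ (Proposition 3.4 (ii), implication ∇N = 0 ⇒ (3), in fiberwise form). -/
open scoped RealInnerProductSpace

/-- Proposition 3.4 (ii), implication ∇N = 0 ⇒ (3), fiberwise:
if `h(x, Ty) = n h(x, y)` for all `x, y ∈ W`, then
`A_{nv} x = -A_v(Tx)` for all `x ∈ W`, `v ∈ W⊥`. -/
theorem shape_n_anticommutes_of_nablaN_zero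
    {V : Type*} [NormedAddCommGroup V] [InnerProductSpace ℝ V] [FiniteDimensional ℝ V]
    (J : V →ₗ[ℝ] V)
    (hJinner : ∀ x y : V, ⟪J x, J y⟫ = ⟪x, y⟫)
    (hJsq : ∀ x : V, J (J x) = -x)
    (W : Submodule ℝ V)
    (T N : V →ₗ[ℝ] V)
    (hT : ∀ x ∈ W, T x ∈ W)
    (hN : ∀ x ∈ W, N x ∈ Wᗮ)
    (hTN : ∀ x ∈ W, J x = T x + N x)
    (t n : V →ₗ[ℝ] V)
    (ht : ∀ v ∈ Wᗮ, t v ∈ W)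
    (hn : ∀ v ∈ Wᗮ, n v ∈ Wᗮ)
    (htn : ∀ v ∈ Wᗮ, J v = t v + n v)
    (h : V →ₗ[ℝ] V →ₗ[ℝ] V)
    (hhmem : ∀ x ∈ W, ∀ y ∈ W, h x y ∈ Wᗮ)
    (hhsymm : ∀ x ∈ W, ∀ y ∈ W, h x y = h y x)
    (A : V → V →ₗ[ℝ] V)
    (hAmem : ∀ v ∈ Wᗮ, ∀ x ∈ W, A v x ∈ W)
    (hA : ∀ v ∈ Wᗮ, ∀ x ∈ W, ∀ y ∈ W, ⟪A v x, y⟫ = ⟪h x y, v⟫)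
    (hnab : ∀ x ∈ W, ∀ y ∈ W, h x (T y) = n (h x y)) :
    ∀ v ∈ Wᗮ, ∀ x ∈ W, A (n v) x = -(A v (T x)) := by
  intro v hv x hx
  -- key: inner products with any y ∈ W agree
  have key : ∀ y ∈ W, ⟪A (n v) x + A v (T x), y⟫ = 0 := by
    intro y hy
    have hxy : h x y ∈ Wᗮ := hhmem x hx y hy
    have h1 : ⟪A (n v) x, y⟫ = ⟪h x y, n v⟫ := hA (n v) (hn v hv) x hx y hy
    -- ⟪h x y, n v⟫ = ⟪h x y, J v⟫
    have h2 : ⟪h x y, n v⟫ = ⟪h x y, J v⟫ := by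
      rw [htn v hv, inner_add_right]
      have : ⟪h x y, t v⟫ = 0 := by
        rw [real_inner_comm]; exact hxy (t v) (ht v hv)
      rw [this]; ring
    -- ⟪a, J v⟫ = -⟪J a, v⟫
    have h3 : ⟪h x y, J v⟫ = -⟪J (h x y), v⟫ := by
      have := hJinner (h x y) (J v)
      rw [hJsq v, inner_neg_right] at this
      linarith
    -- J (h x y) = t (h x y) + n (h x y), and ⟪t (h x y), v⟫ = 0
    have h4 : ⟪J (h x y), v⟫ = ⟪n (h x y), v⟫ := by
      rw [htn (h x y) hxy, inner_add_left]
      have : ⟪t (h x y), v⟫ = 0 := by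
        exact hv (t (h x y)) (ht (h x y) hxy)
      rw [this]; ring
    -- n (h x y) = n (h y x) = h y (T x) = h (T x) y
    have h5 : n (h x y) = h (T x) y := by
      rw [hhsymm x hx y hy, ← hnab y hy x hx, hhsymm y hy (T x) (hT x hx)]
    have h6 : ⟪A v (T x), y⟫ = ⟪h (T x) y, v⟫ := hA v hv (T x) (hT x hx) y hy
    rw [inner_add_left, h1, h2, h3, h4, h5, h6]; ring
  have hmem : A (n v) x + A v (T x) ∈ W :=
    W.add_mem (hAmem (n v) (hn v hv) x hx) (hAmem v hv (T x) (hT x hx))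
  have hzero : A (n v) x + A v (T x) = 0 := by
    have := key _ hmem
    exact inner_self_eq_zero.mp this
  exact eq_neg_of_add_eq_zero_left hzero
end

section
/- Suppose h(x, Ty) = n h(x, y) for all x, y ∈ W (the fiberwise form of the condition ∇N = 0 for a pointwise k-slant submanifold of a Kähler manifold). Then h(x, y) = 0 for every x ∈ D₀, y ∈ Dᵢ, and i ∈ {1,…,k}; that is, the submanifold is (D₀, Dᵢ)-mixed totally geodesic (Theorem 3.6 (i), fiberwise form). -/
open scoped RealInnerProductSpace

/-- Theorem 3.6 (i), fiberwise: if `h(x, Ty) = n h(x, y)` on `W` (the fiberwise form of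
∇N = 0), then `h(x, y) = 0` for `x ∈ D₀`, `y ∈ Dᵢ`, `i ∈ {1,…,k}`
(mixed total geodesicity). -/
theorem mixed_totally_geodesic_of_nablaN_zero
    {V : Type*} [NormedAddCommGroup V] [InnerProductSpace ℝ V] [FiniteDimensional ℝ V]
    (J : V →ₗ[ℝ] V)
    (hJinner : ∀ x y : V, ⟪J x, J y⟫ = ⟪x, y⟫)
    (hJsq : ∀ x : V, J (J x) = -x)
    (W : Submodule ℝ V)
    (T N : V →ₗ[ℝ] V)
    (hT : ∀ x ∈ W, T x ∈ W)
    (hN : ∀ x ∈ W, N x ∈ Wᗮ)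
    (hTN : ∀ x ∈ W, J x = T x + N x)
    (k : ℕ)
    (D : Fin (k+1) → Submodule ℝ V)
    (hDW : ∀ i, D i ≤ W)
    (hDorth : ∀ i j, i ≠ j → ∀ x ∈ D i, ∀ y ∈ D j, ⟪x, y⟫ = 0)
    (hinv : ∀ x ∈ D 0, J x ∈ D 0)
    (hTD : ∀ i : Fin (k+1), i ≠ 0 → ∀ x ∈ D i, T x ∈ D i)
    (θ : Fin (k+1) → ℝ)
    (hθ0 : θ 0 = 0)
    (hθ : ∀ i : Fin (k+1), i ≠ 0 → θ i ∈ Set.Ioc 0 (Real.pi / 2))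
    (hslant : ∀ i : Fin (k+1), i ≠ 0 → ∀ x ∈ D i, ‖T x‖ = Real.cos (θ i) * ‖x‖)
    (P : Fin (k+1) → V →ₗ[ℝ] V)
    (hPmem : ∀ i x, P i x ∈ D i)
    (hPorth : ∀ i x, ∀ y ∈ D i, ⟪x - P i x, y⟫ = 0)
    (hPsum : ∀ x ∈ W, x = ∑ i, P i x)
    (t n : V →ₗ[ℝ] V)
    (ht : ∀ v ∈ Wᗮ, t v ∈ W)
    (hn : ∀ v ∈ Wᗮ, n v ∈ Wᗮ)
    (htn : ∀ v ∈ Wᗮ, J v = t v + n v)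
    (h : V →ₗ[ℝ] V →ₗ[ℝ] V)
    (hhmem : ∀ x ∈ W, ∀ y ∈ W, h x y ∈ Wᗮ)
    (hhsymm : ∀ x ∈ W, ∀ y ∈ W, h x y = h y x)
    (hnab : ∀ x ∈ W, ∀ y ∈ W, h x (T y) = n (h x y)) :
    ∀ i : Fin (k+1), i ≠ 0 → ∀ x ∈ D 0, ∀ y ∈ D i, h x y = 0 := by
  intro i hi x hx y hy
  have hxW : x ∈ W := hDW 0 hx
  have hyW : y ∈ W := hDW i hy
  -- On D 0, T agrees with J.
  have hTJ : ∀ z ∈ D 0, T z = J z := by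
    intro z hz
    have hzW : z ∈ W := hDW 0 hz
    have hJz : J z ∈ W := hDW 0 (hinv z hz)
    have hNrep : N z = J z - T z := by
      have := hTN z hzW; rw [this]; abel
    have hNW : N z ∈ W := by
      rw [hNrep]; exact Submodule.sub_mem W hJz (hT z hzW)
    have hN0 : N z = 0 := by
      have h0 : ⟪N z, N z⟫ = 0 :=
        (Submodule.mem_orthogonal W (N z)).mp (hN z hzW) (N z) hNW
      exact inner_self_eq_zero.mp h0
    have := hTN z hzW
    rw [hN0, add_zero] at this
    exact this.symm
  -- T is skew-symmetric on W.
  have hskew : ∀ a ∈ W, ∀ b ∈ W, ⟪T a, b⟫ = -⟪a, T b⟫ := by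
    intro a ha b hb
    have hNa : ⟪N a, b⟫ = 0 := by
      have := (Submodule.mem_orthogonal W (N a)).mp (hN a ha) b hb
      rwa [real_inner_comm] at this
    have hNb : ⟪a, N b⟫ = 0 :=
      (Submodule.mem_orthogonal W (N b)).mp (hN b hb) a ha
    have hJab : ⟪J a, b⟫ = -⟪a, J b⟫ := by
      have h1 : ⟪J a, J (J b)⟫ = ⟪a, J b⟫ := hJinner a (J b)
      rw [hJsq b] at h1
      have : ⟪J a, -b⟫ = -⟪J a, b⟫ := inner_neg_right _ _
      rw [this] at h1
      linarith
    have ha' : ⟪T a, b⟫ = ⟪J a, b⟫ := by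
      have := hTN a ha
      have : ⟪J a, b⟫ = ⟪T a, b⟫ + ⟪N a, b⟫ := by rw [this, inner_add_left]
      rw [this, hNa, add_zero]
    have hb' : ⟪a, T b⟫ = ⟪a, J b⟫ := by
      have := hTN b hb
      have : ⟪a, J b⟫ = ⟪a, T b⟫ + ⟪a, N b⟫ := by rw [this, inner_add_right]
      rw [this, hNb, add_zero]
    rw [ha', hb', hJab]
  -- T² = -cos²θᵢ on D i.
  set c : ℝ := Real.cos (θ i) ^ 2 with hc
  have hT2 : ∀ z ∈ D i, T (T z) = -(c • z) := by
    intro z hz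
    -- bilinear form f u w = c⟪u,w⟫ - ⟪Tu,Tw⟫ vanishes on diagonal of D i
    have hdiag : ∀ u ∈ D i, c * ⟪u, u⟫ - ⟪T u, T u⟫ = 0 := by
      intro u hu
      have h1 : ⟪T u, T u⟫ = ‖T u‖ ^ 2 := real_inner_self_eq_norm_sq _
      have h2 : ⟪u, u⟫ = ‖u‖ ^ 2 := real_inner_self_eq_norm_sq _
      rw [h1, h2, hslant i hi u hu]
      ring
    have hoff : ∀ u ∈ D i, ∀ w ∈ D i, c * ⟪u, w⟫ - ⟪T u, T w⟫ = 0 := by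
      intro u hu w hw
      have huw := hdiag (u + w) (Submodule.add_mem _ hu hw)
      have hu' := hdiag u hu
      have hw' := hdiag w hw
      have e1 : ⟪u + w, u + w⟫ = ⟪u, u⟫ + ⟪u, w⟫ + ⟪w, u⟫ + ⟪w, w⟫ := by
        simp only [inner_add_add_self]
      have e2 : ⟪T (u + w), T (u + w)⟫
          = ⟪T u, T u⟫ + ⟪T u, T w⟫ + ⟪T w, T u⟫ + ⟪T w, T w⟫ := by
        rw [map_add]; simp only [inner_add_add_self]
      rw [e1, e2] at huw
      have hsym : ⟪w, u⟫ = ⟪u, w⟫ := real_inner_comm _ _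
      have hsymT : ⟪T w, T u⟫ = ⟪T u, T w⟫ := real_inner_comm _ _
      rw [hsym, hsymT] at huw
      linarith
    have hzi : T z ∈ D i := hTD i hi z hz
    have hwmem : T (T z) + c • z ∈ D i :=
      Submodule.add_mem _ (hTD i hi _ hzi) (Submodule.smul_mem _ _ hz)
    have hperp : ∀ u ∈ D i, ⟪T (T z) + c • z, u⟫ = 0 := by
      intro u hu
      have hTz : ⟪T (T z), u⟫ = -⟪T z, T u⟫ :=
        hskew (T z) (hT z (hDW i hz)) u (hDW i hu)
      have : ⟪T (T z) + c • z, u⟫ = ⟪T (T z), u⟫ + c * ⟪z, u⟫ := by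
        rw [inner_add_left, real_inner_smul_left]
      rw [this, hTz]
      have := hoff z hz u hu
      linarith
    have hzero : T (T z) + c • z = 0 := by
      have := hperp _ hwmem
      exact inner_self_eq_zero.mp this
    exact eq_neg_of_add_eq_zero_left hzero
  -- x ∈ D 0 : T x = J x, T (T x) = -x
  have hTx : T x = J x := hTJ x hx
  have hJxD : J x ∈ D 0 := hinv x hx
  have hJxW : J x ∈ W := hDW 0 hJxD
  have hTTx : T (T x) = -x := by
    rw [hTx, hTJ (J x) hJxD, hJsq]
  -- the chain
  have e3 : h y (T x) = n (h y x) := hnab y hyW x hxW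
  have e4 : h y (T (T x)) = n (h y (T x)) := hnab y hyW (T x) (hT x hxW)
  have eTT : h y (T (T x)) = -(h x y) := by
    rw [hTTx, map_neg, hhsymm y hyW x hxW]
  have hnn : n (n (h x y)) = -(h x y) := by
    have : n (n (h y x)) = -(h x y) := by rw [← e3, ← e4, eTT]
    rwa [hhsymm y hyW x hxW] at this
  have e1 : h x (T y) = n (h x y) := hnab x hxW y hyW
  have e2 : h x (T (T y)) = n (h x (T y)) := hnab x hxW (T y) (hT y hyW)
  have efin : h x (T (T y)) = -(h x y) := by rw [e2, e1, hnn]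
  rw [hT2 y hy] at efin
  have efin2 : -(c • h x y) = -(h x y) := by
    rw [← efin, map_neg, map_smul]
  have hsmul : (1 - c) • h x y = 0 := by
    have : c • h x y = h x y := by
      have := neg_injective efin2; exact this
    rw [sub_smul, one_smul, this, sub_self]
  have hcne : (1 - c) ≠ 0 := by
    obtain ⟨hθpos, hθle⟩ := hθ i hi
    have hcos_lt : Real.cos (θ i) < 1 := by
      have h1 : Real.cos (θ i) < Real.cos 0 :=
        Real.cos_lt_cos_of_nonneg_of_le_pi le_rfl (by linarith [Real.pi_pos]) hθpos
      rwa [Real.cos_zero] at h1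
    have hcos_nonneg : 0 ≤ Real.cos (θ i) := by
      apply Real.cos_nonneg_of_mem_Icc
      constructor <;> [linarith [Real.pi_pos]; linarith]
    have : c < 1 := by
      rw [hc]; nlinarith
    linarith
  have := smul_eq_zero.mp hsmul
  rcases this with h1 | h1
  · exact absurd h1 hcne
  · exact h1
end

section
/- Suppose h(x, Ty) = n h(x, y) for all x, y ∈ W (the fiberwise form of the condition ∇N = 0 for a pointwise k-slant submanifold of a Kähler manifold). Then for every i ∈ {0,…,k}, every x ∈ W and every y ∈ Dᵢ, n(n h(x, y)) = -cos²θᵢ · h(x, y); in particular, for x, y ∈ Dᵢ, every nonzero h(x, y) is an eigenvector of n² with eigenvalue -cos²θᵢ (Theorem 3.6 (ii), fiberwise form). -/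
open scoped RealInnerProductSpace

/-- Theorem 3.6 (ii), fiberwise: if `h(x, Ty) = n h(x, y)` on `W` (the fiberwise form of
∇N = 0), then `n²(h(x, y)) = -cos²θᵢ · h(x, y)` for every `i`, `x ∈ W`, `y ∈ Dᵢ`;
in particular any nonzero `h(x, y)` with `x, y ∈ Dᵢ` is an eigenvector of `n²` with
eigenvalue `-cos²θᵢ`. -/
theorem n_sq_eigen_of_nablaN_zero
    {V : Type*} [NormedAddCommGroup V] [InnerProductSpace ℝ V] [FiniteDimensional ℝ V]
    (J : V →ₗ[ℝ] V)
    (hJinner : ∀ x y : V, ⟪J x, J y⟫ = ⟪x, y⟫)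
    (hJsq : ∀ x : V, J (J x) = -x)
    (W : Submodule ℝ V)
    (T N : V →ₗ[ℝ] V)
    (hT : ∀ x ∈ W, T x ∈ W)
    (hN : ∀ x ∈ W, N x ∈ Wᗮ)
    (hTN : ∀ x ∈ W, J x = T x + N x)
    (k : ℕ)
    (D : Fin (k+1) → Submodule ℝ V)
    (hDW : ∀ i, D i ≤ W)
    (hDorth : ∀ i j, i ≠ j → ∀ x ∈ D i, ∀ y ∈ D j, ⟪x, y⟫ = 0)
    (hinv : ∀ x ∈ D 0, J x ∈ D 0)
    (hTD : ∀ i : Fin (k+1), i ≠ 0 → ∀ x ∈ D i, T x ∈ D i)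
    (θ : Fin (k+1) → ℝ)
    (hθ0 : θ 0 = 0)
    (hθ : ∀ i : Fin (k+1), i ≠ 0 → θ i ∈ Set.Ioc 0 (Real.pi / 2))
    (hslant : ∀ i : Fin (k+1), i ≠ 0 → ∀ x ∈ D i, ‖T x‖ = Real.cos (θ i) * ‖x‖)
    (P : Fin (k+1) → V →ₗ[ℝ] V)
    (hPmem : ∀ i x, P i x ∈ D i)
    (hPorth : ∀ i x, ∀ y ∈ D i, ⟪x - P i x, y⟫ = 0)
    (hPsum : ∀ x ∈ W, x = ∑ i, P i x)
    (t n : V →ₗ[ℝ] V)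
    (ht : ∀ v ∈ Wᗮ, t v ∈ W)
    (hn : ∀ v ∈ Wᗮ, n v ∈ Wᗮ)
    (htn : ∀ v ∈ Wᗮ, J v = t v + n v)
    (h : V →ₗ[ℝ] V →ₗ[ℝ] V)
    (hhmem : ∀ x ∈ W, ∀ y ∈ W, h x y ∈ Wᗮ)
    (hhsymm : ∀ x ∈ W, ∀ y ∈ W, h x y = h y x)
    (hnab : ∀ x ∈ W, ∀ y ∈ W, h x (T y) = n (h x y)) :
    ∀ i : Fin (k+1), ∀ x ∈ W, ∀ y ∈ D i,
      n (n (h x y)) = -((Real.cos (θ i)) ^ 2 • h x y) := by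
  -- J is skew
  have hJskew : ∀ x z : V, ⟪J x, z⟫ = -⟪x, J z⟫ := by
    intro x z
    have h1 := hJinner x (J z)
    rw [hJsq z, inner_neg_right] at h1
    linarith
  -- inner of element of Wᗮ with element of W vanishes
  have horthW : ∀ v ∈ Wᗮ, ∀ z ∈ W, ⟪v, z⟫ = 0 := by
    intro v hv z hz
    rw [real_inner_comm]
    exact (Submodule.mem_orthogonal W v).mp hv z hz
  -- T is skew on W
  have hskew : ∀ x ∈ W, ∀ z ∈ W, ⟪T x, z⟫ = -⟪x, T z⟫ := by
    intro x hx z hz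
    have e1 : ⟪J x, z⟫ = ⟪T x, z⟫ := by
      rw [hTN x hx, inner_add_left, horthW _ (hN x hx) z hz, add_zero]
    have e2 : ⟪x, J z⟫ = ⟪x, T z⟫ := by
      have hxN : ⟪x, N z⟫ = (0:ℝ) := by
        rw [real_inner_comm]; exact horthW _ (hN z hz) x hx
      rw [hTN z hz, inner_add_right, hxN, add_zero]
    rw [← e1, ← e2, hJskew]
  -- on D 0, T = J
  have hTD0 : ∀ y ∈ D 0, T y = J y := by
    intro y hy
    have hyW : y ∈ W := hDW 0 hy
    have hNy : N y ∈ W := by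
      have : N y = J y - T y := by rw [hTN y hyW]; abel
      rw [this]
      exact Submodule.sub_mem W (hDW 0 (hinv y hy)) (hT y hyW)
    have : ⟪N y, N y⟫ = 0 := horthW _ (hN y hyW) _ hNy
    have hNy0 : N y = 0 := by
      have := inner_self_eq_zero (𝕜 := ℝ) (x := N y)
      exact this.mp ‹_›
    have := hTN y hyW
    rw [hNy0, add_zero] at this
    exact this.symm
  -- T preserves each D i
  have hTDall : ∀ i, ∀ y ∈ D i, T y ∈ D i := by
    intro i y hy
    by_cases hi : i = 0
    · subst hi; rw [hTD0 y hy]; exact hinv y hy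
    · exact hTD i hi y hy
  -- polarization: ⟪T x, T y⟫ = cos² ⟪x, y⟫ on D i
  have hpol : ∀ i, ∀ x ∈ D i, ∀ y ∈ D i, ⟪T x, T y⟫ = Real.cos (θ i) ^ 2 * ⟪x, y⟫ := by
    intro i x hx y hy
    by_cases hi : i = 0
    · subst hi
      rw [hTD0 x hx, hTD0 y hy, hJinner, hθ0, Real.cos_zero, one_pow, one_mul]
    · have hxy : x + y ∈ D i := Submodule.add_mem _ hx hy
      have e1 : ‖T (x + y)‖ ^ 2 = (Real.cos (θ i)) ^ 2 * ‖x + y‖ ^ 2 := by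
        rw [hslant i hi _ hxy]; ring
      have e2 : ‖T x‖ ^ 2 = (Real.cos (θ i)) ^ 2 * ‖x‖ ^ 2 := by
        rw [hslant i hi _ hx]; ring
      have e3 : ‖T y‖ ^ 2 = (Real.cos (θ i)) ^ 2 * ‖y‖ ^ 2 := by
        rw [hslant i hi _ hy]; ring
      have n1 : ‖T x + T y‖ ^ 2 = ‖T x‖ ^ 2 + 2 * ⟪T x, T y⟫ + ‖T y‖ ^ 2 :=
        norm_add_sq_real _ _
      have n2 : ‖x + y‖ ^ 2 = ‖x‖ ^ 2 + 2 * ⟪x, y⟫ + ‖y‖ ^ 2 :=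
        norm_add_sq_real _ _
      rw [map_add] at e1
      rw [n1, n2] at e1
      nlinarith [e1, e2, e3]
  -- T² = -cos² on D i
  have hTsq : ∀ i, ∀ y ∈ D i, T (T y) = -((Real.cos (θ i)) ^ 2 • y) := by
    intro i y hy
    have hyW : y ∈ W := hDW i hy
    have hTyW : T y ∈ W := hT y hyW
    set u : V := T (T y) + (Real.cos (θ i)) ^ 2 • y with hu
    have huW : u ∈ W := Submodule.add_mem _ (hT _ hTyW) (Submodule.smul_mem _ _ hyW)
    have hkey : ∀ z ∈ W, ⟪u, z⟫ = 0 := by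
      intro z hz
      have hz' := hPsum z hz
      have hTy : T y ∈ D i := hTDall i y hy
      -- ⟪T (T y), z⟫ = -⟪T y, T z⟫
      have e0 : ⟪T (T y), z⟫ = -⟪T y, T z⟫ := hskew _ hTyW z hz
      have eTz : ⟪T y, T z⟫ = Real.cos (θ i) ^ 2 * ⟪y, P i z⟫ := by
        conv_lhs => rw [hz']
        rw [map_sum, inner_sum]
        rw [Finset.sum_eq_single i]
        · exact hpol i y hy _ (hPmem i z)
        · intro j _ hj
          exact hDorth i j (fun e => hj e.symm) _ hTy _ (hTDall j _ (hPmem j z))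
        · intro hi; exact absurd (Finset.mem_univ i) hi
      have eyz : ⟪y, z⟫ = ⟪y, P i z⟫ := by
        conv_lhs => rw [hz']
        rw [inner_sum, Finset.sum_eq_single i]
        · intro j _ hj
          exact hDorth i j (fun e => hj e.symm) _ hy _ (hPmem j z)
        · intro hi; exact absurd (Finset.mem_univ i) hi
      rw [hu, inner_add_left, real_inner_smul_left, e0, eTz, eyz]
      ring
    have : ⟪u, u⟫ = 0 := hkey u huW
    have hu0 : u = 0 := inner_self_eq_zero.mp this
    have : T (T y) = -((Real.cos (θ i)) ^ 2 • y) := by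
      have := hu0
      rw [hu] at this
      linear_combination (norm := abel) this
    exact this
  -- conclusion
  intro i x hx y hy
  have hyW : y ∈ W := hDW i hy
  have hTyW : T y ∈ W := hT y hyW
  calc n (n (h x y)) = n (h x (T y)) := by rw [hnab x hx y hyW]
    _ = h x (T (T y)) := by rw [hnab x hx (T y) hTyW]
    _ = -((Real.cos (θ i)) ^ 2 • h x y) := by
        rw [hTsq i y hy]
        simp
end

section
/- Suppose T(A_v x) = -A_v(Tx) for all x ∈ W and v ∈ W⊥ (which holds when ∇N = 0 for a submanifold of a Kähler manifold). Then for every i ∈ {0,…,k}, every x ∈ Dᵢ and every v ∈ W⊥, T(T(A_v x)) = -cos²θᵢ · A_v x; in particular, every nonzero A_v x with x ∈ Dᵢ is an eigenvector of T² with eigenvalue -cos²θᵢ (Theorem 3.6 (iii), fiberwise form). -/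
open scoped RealInnerProductSpace

/-- Theorem 3.6 (iii), fiberwise: if `T(A_v x) = -A_v(Tx)` for all `x ∈ W`, `v ∈ W⊥`
(which holds when ∇N = 0 for a submanifold of a Kähler manifold), then
`T²(A_v x) = -cos²θᵢ · A_v x` for every `i`, `x ∈ Dᵢ`, `v ∈ W⊥`; in particular any
nonzero `A_v x` with `x ∈ Dᵢ` is an eigenvector of `T²` with eigenvalue `-cos²θᵢ`. -/
theorem T_sq_eigen_of_T_anticommutes_shape
    {V : Type*} [NormedAddCommGroup V] [InnerProductSpace ℝ V] [FiniteDimensional ℝ V]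
    (J : V →ₗ[ℝ] V)
    (hJinner : ∀ x y : V, ⟪J x, J y⟫ = ⟪x, y⟫)
    (hJsq : ∀ x : V, J (J x) = -x)
    (W : Submodule ℝ V)
    (T N : V →ₗ[ℝ] V)
    (hT : ∀ x ∈ W, T x ∈ W)
    (hN : ∀ x ∈ W, N x ∈ Wᗮ)
    (hTN : ∀ x ∈ W, J x = T x + N x)
    (k : ℕ)
    (D : Fin (k+1) → Submodule ℝ V)
    (hDW : ∀ i, D i ≤ W)
    (hDorth : ∀ i j, i ≠ j → ∀ x ∈ D i, ∀ y ∈ D j, ⟪x, y⟫ = 0)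
    (hinv : ∀ x ∈ D 0, J x ∈ D 0)
    (hTD : ∀ i : Fin (k+1), i ≠ 0 → ∀ x ∈ D i, T x ∈ D i)
    (θ : Fin (k+1) → ℝ)
    (hθ0 : θ 0 = 0)
    (hθ : ∀ i : Fin (k+1), i ≠ 0 → θ i ∈ Set.Ioc 0 (Real.pi / 2))
    (hslant : ∀ i : Fin (k+1), i ≠ 0 → ∀ x ∈ D i, ‖T x‖ = Real.cos (θ i) * ‖x‖)
    (P : Fin (k+1) → V →ₗ[ℝ] V)
    (hPmem : ∀ i x, P i x ∈ D i)
    (hPorth : ∀ i x, ∀ y ∈ D i, ⟪x - P i x, y⟫ = 0)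
    (hPsum : ∀ x ∈ W, x = ∑ i, P i x)
    (t n : V →ₗ[ℝ] V)
    (ht : ∀ v ∈ Wᗮ, t v ∈ W)
    (hn : ∀ v ∈ Wᗮ, n v ∈ Wᗮ)
    (htn : ∀ v ∈ Wᗮ, J v = t v + n v)
    (h : V →ₗ[ℝ] V →ₗ[ℝ] V)
    (hhmem : ∀ x ∈ W, ∀ y ∈ W, h x y ∈ Wᗮ)
    (hhsymm : ∀ x ∈ W, ∀ y ∈ W, h x y = h y x)
    (A : V → V →ₗ[ℝ] V)
    (hAmem : ∀ v ∈ Wᗮ, ∀ x ∈ W, A v x ∈ W)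
    (hA : ∀ v ∈ Wᗮ, ∀ x ∈ W, ∀ y ∈ W, ⟪A v x, y⟫ = ⟪h x y, v⟫)
    (hyp : ∀ v ∈ Wᗮ, ∀ x ∈ W, T (A v x) = -(A v (T x))) :
    ∀ i : Fin (k+1), ∀ x ∈ D i, ∀ v ∈ Wᗮ,
      T (T (A v x)) = -((Real.cos (θ i)) ^ 2 • A v x) := by

  -- J is skew-adjoint
  have hJskew : ∀ a b : V, ⟪J a, b⟫ = -⟪a, J b⟫ := by
    intro a b
    have := hJinner a (J b)
    rw [hJsq b] at this
    simp only [inner_neg_right] at this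
    linarith
  -- T is skew on W
  have hskew : ∀ a ∈ W, ∀ b ∈ W, ⟪T a, b⟫ = -⟪a, T b⟫ := by
    intro a ha b hb
    have hNa : ⟪N a, b⟫ = 0 := by
      rw [real_inner_comm]; exact (hN a ha) b hb
    have hNb : ⟪a, N b⟫ = 0 := (hN b hb) a ha
    have h1 : ⟪J a, b⟫ = ⟪T a, b⟫ := by
      rw [hTN a ha, inner_add_left, hNa, add_zero]
    have h2 : ⟪a, J b⟫ = ⟪a, T b⟫ := by
      rw [hTN b hb, inner_add_right, hNb, add_zero]
    rw [← h1, ← h2]; exact hJskew a b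
  -- key: T² = -cos²θᵢ on Dᵢ
  have key : ∀ i : Fin (k+1), ∀ x ∈ D i, T (T x) = -((Real.cos (θ i)) ^ 2 • x) := by
    intro i x hx
    by_cases hi : i = 0
    · subst hi
      -- N x = 0, T x = J x
      have hxW := hDW 0 hx
      have hJxD := hinv x hx
      have hJxW := hDW 0 hJxD
      have hNx : N x = 0 := by
        have hmemW : N x ∈ W := by
          have : N x = J x - T x := by
            have := hTN x hxW; rw [this]; abel
          rw [this]; exact Submodule.sub_mem W hJxW (hT x hxW)
        have horth := hN x hxW
        have : ⟪N x, N x⟫ = 0 := by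
          rw [real_inner_comm]; exact horth (N x) hmemW
        exact inner_self_eq_zero.mp this
      have hTx : T x = J x := by
        have := hTN x hxW; rw [hNx, add_zero] at this; exact this.symm
      have hNJx : N (J x) = 0 := by
        have hmemW : N (J x) ∈ W := by
          have : N (J x) = J (J x) - T (J x) := by
            have := hTN (J x) hJxW; rw [this]; abel
          rw [this]; exact Submodule.sub_mem W
            (by rw [hJsq x]; exact Submodule.neg_mem W hxW) (hT (J x) hJxW)
        have horth := hN (J x) hJxW
        have : ⟪N (J x), N (J x)⟫ = 0 := by
          rw [real_inner_comm]; exact horth (N (J x)) hmemW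
        exact inner_self_eq_zero.mp this
      have hTJx : T (J x) = J (J x) := by
        have := hTN (J x) hJxW; rw [hNJx, add_zero] at this; exact this.symm
      rw [hTx, hTJx, hJsq x, hθ0]
      simp
    · -- slant case
      set c := Real.cos (θ i) with hc
      have hxW := hDW i hx
      have hTT : ∀ a ∈ D i, ∀ b ∈ D i, ⟪T a, T b⟫ = c ^ 2 * ⟪a, b⟫ := by
        intro a ha b hb
        have hab : a + b ∈ D i := Submodule.add_mem _ ha hb
        have e1 : ‖T (a + b)‖ = c * ‖a + b‖ := hslant i hi _ hab
        have e2 : ‖T a‖ = c * ‖a‖ := hslant i hi a ha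
        have e3 : ‖T b‖ = c * ‖b‖ := hslant i hi b hb
        have q1 : ‖T a + T b‖ ^ 2 = ‖T a‖ ^ 2 + 2 * ⟪T a, T b⟫ + ‖T b‖ ^ 2 :=
          norm_add_sq_real _ _
        have q2 : ‖a + b‖ ^ 2 = ‖a‖ ^ 2 + 2 * ⟪a, b⟫ + ‖b‖ ^ 2 :=
          norm_add_sq_real _ _
        have hmap : T (a + b) = T a + T b := map_add T a b
        rw [← hmap, e1, e2, e3, mul_pow, mul_pow, mul_pow, q2] at q1
        nlinarith [q1]
      have hmemD : T (T x) + c ^ 2 • x ∈ D i :=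
        Submodule.add_mem _ (hTD i hi _ (hTD i hi x hx)) (Submodule.smul_mem _ _ hx)
      have hTxW := hT x hxW
      have hperp : ∀ y ∈ D i, ⟪T (T x) + c ^ 2 • x, y⟫ = 0 := by
        intro y hy
        have hyW := hDW i hy
        have h1 : ⟪T (T x), y⟫ = -⟪T x, T y⟫ := hskew (T x) hTxW y hyW
        have h2 : ⟪T x, T y⟫ = c ^ 2 * ⟪x, y⟫ := hTT x hx y hy
        rw [inner_add_left, h1, h2, real_inner_smul_left]
        ring
      have hzero : T (T x) + c ^ 2 • x = 0 := by
        have := hperp _ hmemD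
        exact inner_self_eq_zero.mp this
      have : T (T x) = -(c ^ 2 • x) := by
        rw [eq_neg_iff_add_eq_zero]; exact hzero
      exact this
  intro i x hx v hv
  have hxW := hDW i hx
  have hTxW := hT x hxW
  calc T (T (A v x)) = T (-(A v (T x))) := by rw [hyp v hv x hxW]
    _ = -(T (A v (T x))) := map_neg T _
    _ = -(-(A v (T (T x)))) := by rw [hyp v hv (T x) hTxW]
    _ = A v (T (T x)) := neg_neg _
    _ = A v (-((Real.cos (θ i)) ^ 2 • x)) := by rw [key i x hx]
    _ = -((Real.cos (θ i)) ^ 2 • A v x) := by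
        rw [map_neg, map_smul]
end

section
/- If n h(x, y) = h(x, Ty) for all x, y ∈ D₀ (as holds on the invariant distribution of a pointwise k-slant submanifold of a Kähler manifold with ∇T = 0), then n(n h(x, y)) = -h(x, y) for all x, y ∈ D₀; in particular, either h vanishes on D₀ × D₀, or -1 is an eigenvalue of n² and every nonzero h(x, y) with x, y ∈ D₀ is an eigenvector for it (Theorem 3.5 (iii), fiberwise form). -/
open scoped RealInnerProductSpace

/-- Theorem 3.5 (iii), fiberwise: if `n h(x, y) = h(x, Ty)` for all `x, y ∈ D₀`, then
`n²(h(x, y)) = -h(x, y)` for all `x, y ∈ D₀`; in particular, either `h` vanishes on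
`D₀ × D₀`, or `-1` is an eigenvalue of `n²` and every nonzero `h(x, y)` with
`x, y ∈ D₀` is an eigenvector for it. -/
theorem n_sq_eq_neg_one_on_invariant
    {V : Type*} [NormedAddCommGroup V] [InnerProductSpace ℝ V] [FiniteDimensional ℝ V]
    (J : V →ₗ[ℝ] V)
    (hJinner : ∀ x y : V, ⟪J x, J y⟫ = ⟪x, y⟫)
    (hJsq : ∀ x : V, J (J x) = -x)
    (W : Submodule ℝ V)
    (T N : V →ₗ[ℝ] V)
    (hT : ∀ x ∈ W, T x ∈ W)
    (hN : ∀ x ∈ W, N x ∈ Wᗮ)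
    (hTN : ∀ x ∈ W, J x = T x + N x)
    (k : ℕ)
    (D : Fin (k+1) → Submodule ℝ V)
    (hDW : ∀ i, D i ≤ W)
    (hDorth : ∀ i j, i ≠ j → ∀ x ∈ D i, ∀ y ∈ D j, ⟪x, y⟫ = 0)
    (hinv : ∀ x ∈ D 0, J x ∈ D 0)
    (hTD : ∀ i : Fin (k+1), i ≠ 0 → ∀ x ∈ D i, T x ∈ D i)
    (θ : Fin (k+1) → ℝ)
    (hθ0 : θ 0 = 0)
    (hθ : ∀ i : Fin (k+1), i ≠ 0 → θ i ∈ Set.Ioc 0 (Real.pi / 2))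
    (hslant : ∀ i : Fin (k+1), i ≠ 0 → ∀ x ∈ D i, ‖T x‖ = Real.cos (θ i) * ‖x‖)
    (P : Fin (k+1) → V →ₗ[ℝ] V)
    (hPmem : ∀ i x, P i x ∈ D i)
    (hPorth : ∀ i x, ∀ y ∈ D i, ⟪x - P i x, y⟫ = 0)
    (hPsum : ∀ x ∈ W, x = ∑ i, P i x)
    (t n : V →ₗ[ℝ] V)
    (ht : ∀ v ∈ Wᗮ, t v ∈ W)
    (hn : ∀ v ∈ Wᗮ, n v ∈ Wᗮ)
    (htn : ∀ v ∈ Wᗮ, J v = t v + n v)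
    (h : V →ₗ[ℝ] V →ₗ[ℝ] V)
    (hhmem : ∀ x ∈ W, ∀ y ∈ W, h x y ∈ Wᗮ)
    (hhsymm : ∀ x ∈ W, ∀ y ∈ W, h x y = h y x)
    (hnab : ∀ x ∈ D 0, ∀ y ∈ D 0, n (h x y) = h x (T y)) :
    ∀ x ∈ D 0, ∀ y ∈ D 0, n (n (h x y)) = -(h x y) := by
  -- On D0, T = J.
  have hTJ : ∀ z ∈ D 0, T z = J z := by
    intro z hz
    have hzW : z ∈ W := hDW 0 hz
    have hNmem : N z ∈ Wᗮ := hN z hzW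
    have hNW : N z ∈ W := by
      have : N z = J z - T z := by
        rw [hTN z hzW]; abel
      rw [this]
      exact Submodule.sub_mem W (hDW 0 (hinv z hz)) (hT z hzW)
    have hN0 : N z = 0 := by
      have := (Submodule.mem_orthogonal W (N z)).mp hNmem (N z) hNW
      exact inner_self_eq_zero.mp this
    have := hTN z hzW
    rw [hN0, add_zero] at this
    exact this.symm
  intro x hx y hy
  have hTy : T y ∈ D 0 := by rw [hTJ y hy]; exact hinv y hy
  have h1 : n (n (h x y)) = h x (T (T y)) := by
    rw [hnab x hx y hy, hnab x hx (T y) hTy]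
  have h2 : T (T y) = -y := by
    rw [hTJ (T y) hTy, hTJ y hy, hJsq]
  rw [h1, h2, map_neg]
end
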